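/- arXiv:1310.0708 — 5 statements merged into one kernel-verified Lean document; each statement's English description precedes it below -/
import Mathlib

section
/- If Q : ℝ → ℝ is continuous with Q(s) ≥ 0 for all s, and y : ℝ → ℝ is a nonconstant solution of y'' + Q·y = 0 defined on all of ℝ, then y has at least one zero. -/
lemma const_of_concave_pos (y : ℝ → ℝ) (hy : Differentiable ℝ y)
    (hy' : Differentiable ℝ (deriv y)) (hcc : ∀ s, deriv (deriv y) s ≤ 0)
    (hpos : ∀ s, 0 < y s) : ∃ k : ℝ, ∀ s, y s = k := by
  have hanti : Antitone (deriv y) := antitone_of_deriv_nonpos hy' hcc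
  have hzero : ∀ a, deriv y a = 0 := by
    intro a
    by_contra h
    obtain ⟨m, hmdef⟩ : ∃ m, m = deriv y a := ⟨_, rfl⟩
    rw [← hmdef] at h
    rcases lt_or_gt_of_ne h with hm | hm
    · -- deriv y a < 0 : go right
      obtain ⟨q, hq⟩ : ∃ q, q = y a / (-m) := ⟨_, rfl⟩
      have hqpos : 0 < q := hq ▸ div_pos (hpos a) (by linarith)
      obtain ⟨t, ht⟩ : ∃ t, t = a + q + 1 := ⟨_, rfl⟩
      have hta : a < t := by linarith
      obtain ⟨c, hc, hceq⟩ := exists_deriv_eq_slope y hta hy.continuous.continuousOn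
        hy.differentiableOn
      have h1 : deriv y c ≤ m := hmdef ▸ hanti hc.1.le
      have h2 : (y t - y a) / (t - a) ≤ m := hceq ▸ h1
      have h3 : y t - y a ≤ m * (t - a) := by
        rw [div_le_iff₀ (by linarith)] at h2; linarith
      have h5 : m * q = -y a := by
        rw [hq, mul_div_assoc']
        rw [div_eq_iff (by linarith : (-m) ≠ 0)]
        ring
      have h4 : m * (t - a) = m * q + m := by rw [ht]; ring
      have := hpos t
      linarith
    · -- deriv y a > 0 : go left
      obtain ⟨q, hq⟩ : ∃ q, q = y a / m := ⟨_, rfl⟩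
      have hqpos : 0 < q := hq ▸ div_pos (hpos a) hm
      obtain ⟨t, ht⟩ : ∃ t, t = a - q - 1 := ⟨_, rfl⟩
      have hta : t < a := by linarith
      obtain ⟨c, hc, hceq⟩ := exists_deriv_eq_slope y hta hy.continuous.continuousOn
        hy.differentiableOn
      have h1 : m ≤ deriv y c := hmdef ▸ hanti hc.2.le
      have h2 : m ≤ (y a - y t) / (a - t) := hceq ▸ h1
      have h3 : m * (a - t) ≤ y a - y t := by
        rw [le_div_iff₀ (by linarith)] at h2; linarith
      have h5 : m * q = y a := by
        rw [hq, mul_div_assoc']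
        rw [div_eq_iff (by linarith : m ≠ 0)]
        ring
      have h4 : m * (a - t) = m * q + m := by rw [ht]; ring
      have := hpos t
      linarith
  exact ⟨y 0, fun s => is_const_of_deriv_eq_zero hy hzero s 0⟩

/-- If `Q ≥ 0` is continuous and `y` is a nonconstant solution of `y'' + Q y = 0`
on all of `ℝ`, then `y` has at least one zero. -/
theorem exists_zero_of_nonconstant_solution (Q y : ℝ → ℝ) (hQ : Continuous Q)
    (hQpos : ∀ s, 0 ≤ Q s)
    (hy : Differentiable ℝ y) (hy' : Differentiable ℝ (deriv y))
    (hode : ∀ s, deriv (deriv y) s + Q s * y s = 0)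
    (hnc : ¬ ∃ k : ℝ, ∀ s, y s = k) :
    ∃ s, y s = 0 := by
  by_contra h
  push_neg at h
  have hcont : Continuous y := hy.continuous
  have key : ∀ a b : ℝ, y a < 0 → 0 < y b → False := by
    intro a b ha hb
    obtain ⟨c, hc⟩ := intermediate_value_univ a b hcont ⟨ha.le, hb.le⟩
    exact h c hc
  have hsign : (∀ s, 0 < y s) ∨ (∀ s, y s < 0) := by
    rcases lt_or_gt_of_ne (h 0) with h0 | h0
    · right; intro s
      rcases lt_or_gt_of_ne (h s) with hs | hs
      · exact hs
      · exact absurd (key 0 s h0 hs) (not_false)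
    · left; intro s
      rcases lt_or_gt_of_ne (h s) with hs | hs
      · exact absurd (key s 0 hs h0) (not_false)
      · exact hs
  rcases hsign with hp | hn
  · apply hnc
    apply const_of_concave_pos y hy hy'
    · intro s
      have := hode s
      nlinarith [mul_nonneg (hQpos s) (hp s).le]
    · exact hp
  · apply hnc
    have hdneg : deriv (fun s => -y s) = fun s => -deriv y s := by
      funext s; exact deriv.neg
    have hz : Differentiable ℝ (fun s => -y s) := hy.neg
    have hz' : Differentiable ℝ (deriv (fun s => -y s)) := by
      rw [hdneg]; exact hy'.neg
    obtain ⟨k, hk⟩ := const_of_concave_pos (fun s => -y s) hz hz'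
      (by
        intro s
        rw [hdneg]
        have h2 : deriv (fun s => -deriv y s) s = -deriv (deriv y) s := deriv.neg
        rw [h2]
        have := hode s
        nlinarith [mul_nonneg (hQpos s) (neg_nonneg.mpr (hn s).le)])
      (fun s => by simpa using (hn s))
    exact ⟨-k, fun s => by have := hk s; simpa using by linarith [hk s]⟩
end

section
/- (Sturm separation theorem) Let y₁, y₂ : ℝ → ℝ be two linearly independent solutions of y'' + Q(s)·y = 0 with Q continuous. If a < b are two consecutive zeros of y₂ (i.e., y₂(a) = y₂(b) = 0 and y₂ ≠ 0 on (a,b)), then y₁ has exactly one zero in the open interval (a, b). -/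
/-- Key auxiliary lemma: if `u` and `v` have everywhere-nonzero Wronskian and
`u` vanishes at `a < b`, then `v` vanishes somewhere in `(a, b)`. -/
lemma sturm_aux (u v : ℝ → ℝ) (hu : Differentiable ℝ u) (hv : Differentiable ℝ v)
    (hW : ∀ s, u s * deriv v s - v s * deriv u s ≠ 0)
    (a b : ℝ) (hab : a < b) (ha : u a = 0) (hb : u b = 0) :
    ∃ c ∈ Set.Ioo a b, v c = 0 := by
  by_contra h
  push_neg at h
  have hva : v a ≠ 0 := by
    intro hva; exact hW a (by rw [ha, hva]; ring)
  have hvb : v b ≠ 0 := by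
    intro hvb; exact hW b (by rw [hb, hvb]; ring)
  have hvIcc : ∀ x ∈ Set.Icc a b, v x ≠ 0 := by
    intro x hx
    rcases eq_or_lt_of_le hx.1 with h1 | h1
    · rwa [← h1]
    rcases eq_or_lt_of_le hx.2 with h2 | h2
    · rwa [h2]
    exact h x ⟨h1, h2⟩
  obtain ⟨c, hc, hc0⟩ := exists_hasDerivAt_eq_zero (f := fun s => u s / v s)
    (f' := fun s => (deriv u s * v s - u s * deriv v s) / v s ^ 2) hab
    ((hu.continuous.continuousOn).div (hv.continuous.continuousOn) hvIcc)
    (by show u a / v a = u b / v b; rw [ha, hb]; simp)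
    (fun x hx => (hu.differentiableAt.hasDerivAt).div (hv.differentiableAt.hasDerivAt)
      (hvIcc x (Set.Ioo_subset_Icc_self hx)))
  have hvc : v c ≠ 0 := hvIcc c (Set.Ioo_subset_Icc_self hc)
  have : deriv u c * v c - u c * deriv v c = 0 := by
    have := hc0
    field_simp at this
    linarith [this]
  exact hW c (by linarith)

/-- Sturm separation theorem: between two consecutive zeros of `y₂`, a linearly
independent solution `y₁` has exactly one zero. -/
theorem sturm_separation (Q y₁ y₂ : ℝ → ℝ) (hQ : Continuous Q)
    (hy₁ : Differentiable ℝ y₁) (hy₁' : Differentiable ℝ (deriv y₁))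
    (hy₂ : Differentiable ℝ y₂) (hy₂' : Differentiable ℝ (deriv y₂))
    (hode₁ : ∀ s, deriv (deriv y₁) s + Q s * y₁ s = 0)
    (hode₂ : ∀ s, deriv (deriv y₂) s + Q s * y₂ s = 0)
    (hW : ∀ s, y₁ s * deriv y₂ s - y₂ s * deriv y₁ s ≠ 0)
    (a b : ℝ) (hab : a < b) (ha : y₂ a = 0) (hb : y₂ b = 0)
    (hcons : ∀ s ∈ Set.Ioo a b, y₂ s ≠ 0) :
    ∃! s, s ∈ Set.Ioo a b ∧ y₁ s = 0 := by
  have hW' : ∀ s, y₂ s * deriv y₁ s - y₁ s * deriv y₂ s ≠ 0 := by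
    intro s hs; exact hW s (by linarith)
  obtain ⟨c, hc, hc0⟩ := sturm_aux y₂ y₁ hy₂ hy₁ hW' a b hab ha hb
  refine ⟨c, ⟨hc, hc0⟩, ?_⟩
  rintro t ⟨ht, ht0⟩
  by_contra hne
  rcases lt_or_gt_of_ne hne with hlt | hlt
  · obtain ⟨d, hd, hd0⟩ := sturm_aux y₁ y₂ hy₁ hy₂ hW t c hlt ht0 hc0
    exact hcons d ⟨ht.1.trans hd.1, hd.2.trans hc.2⟩ hd0
  · obtain ⟨d, hd, hd0⟩ := sturm_aux y₁ y₂ hy₁ hy₂ hW c t hlt hc0 ht0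
    exact hcons d ⟨hc.1.trans hd.1, hd.2.trans ht.2⟩ hd0
end

section
/- (Principal solution) If the equation y'' + Q(s)·y = 0 with Q continuous is nonoscillatory at s = +∞ (i.e., solutions have no zeros for sufficiently large s), then there exists a nontrivial solution y₂, unique up to a constant factor, such that for every solution y₁ linearly independent of y₂, the ratio y₂(s)/y₁(s) tends to 0 as s → +∞. -/
open Filter

open Set MeasureTheory intervalIntegral Function

/-- `y` is a (twice differentiable) solution of `y'' + Q y = 0` on `ℝ`. -/
def IsSol (Q y : ℝ → ℝ) : Prop :=
  Differentiable ℝ y ∧ Differentiable ℝ (deriv y) ∧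
    ∀ s, deriv (deriv y) s + Q s * y s = 0


lemma split_integral {g : ℝ → ℝ} {t₀ s : ℝ} (hg : ContinuousOn g (Set.uIcc t₀ s)) :
    ∫ t in t₀..s, (s - t) * g t = s * (∫ t in t₀..s, g t) - ∫ t in t₀..s, t * g t := by
  have h1 : IntervalIntegrable g volume t₀ s := hg.intervalIntegrable
  have h2 : IntervalIntegrable (fun t => t * g t) volume t₀ s :=
    ((continuous_id.continuousOn).mul hg).intervalIntegrable
  have h3 : IntervalIntegrable (fun t => s * g t) volume t₀ s :=
    (continuousOn_const.mul hg).intervalIntegrable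
  calc ∫ t in t₀..s, (s - t) * g t = ∫ t in t₀..s, (s * g t - t * g t) := by
        apply intervalIntegral.integral_congr; intro t _; ring
    _ = (∫ t in t₀..s, s * g t) - ∫ t in t₀..s, t * g t := intervalIntegral.integral_sub h3 h2
    _ = s * (∫ t in t₀..s, g t) - ∫ t in t₀..s, t * g t := by
        rw [intervalIntegral.integral_const_mul]

lemma abs_integral_le_pow {t₀ s c : ℝ} {k : ℕ} {h : ℝ → ℝ}
    (hc : 0 ≤ c) (hcont : ContinuousOn h (Set.uIcc t₀ s))
    (hb : ∀ t ∈ Set.uIcc t₀ s, |h t| ≤ c * |t - t₀| ^ k) :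
    |∫ t in t₀..s, h t| ≤ c * |s - t₀| ^ (k + 1) / (k + 1) := by
  rcases le_total t₀ s with hle | hle
  · rw [Set.uIcc_of_le hle] at hcont hb
    have habs : |∫ t in t₀..s, h t| ≤ ∫ t in t₀..s, |h t| :=
      by simpa [Real.norm_eq_abs] using intervalIntegral.norm_integral_le_integral_norm (f := h) (μ := volume) hle
    have hmono : (∫ t in t₀..s, |h t|) ≤ ∫ t in t₀..s, c * (t - t₀) ^ k := by
      apply intervalIntegral.integral_mono_on hle
        ((Set.uIcc_of_le hle ▸ hcont.abs).intervalIntegrable)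
        ((continuousOn_const.mul (((continuous_id.sub continuous_const).pow k).continuousOn)).intervalIntegrable)
      intro t ht
      calc |h t| ≤ c * |t - t₀| ^ k := hb t ht
        _ = c * (t - t₀) ^ k := by rw [abs_of_nonneg (by linarith [ht.1])]
    have hval : (∫ t in t₀..s, c * (t - t₀) ^ k) = c * (s - t₀) ^ (k + 1) / (k + 1) := by
      rw [intervalIntegral.integral_const_mul]
      have := intervalIntegral.integral_comp_sub_right (a := t₀) (b := s) (fun u => u ^ k) t₀
      rw [this, sub_self, integral_pow]
      push_cast; ring
    rw [abs_of_nonneg (by linarith : (0:ℝ) ≤ s - t₀)]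
    calc |∫ t in t₀..s, h t| ≤ ∫ t in t₀..s, |h t| := habs
      _ ≤ _ := hmono
      _ = _ := hval
  · rw [Set.uIcc_of_ge hle] at hcont hb
    rw [intervalIntegral.integral_symm, abs_neg]
    have habs : |∫ t in s..t₀, h t| ≤ ∫ t in s..t₀, |h t| :=
      by simpa [Real.norm_eq_abs] using intervalIntegral.norm_integral_le_integral_norm (f := h) (μ := volume) hle
    have hmono : (∫ t in s..t₀, |h t|) ≤ ∫ t in s..t₀, c * (t₀ - t) ^ k := by
      apply intervalIntegral.integral_mono_on hle
        ((Set.uIcc_of_le hle ▸ hcont.abs).intervalIntegrable)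
        ((continuousOn_const.mul (((continuous_const.sub continuous_id).pow k).continuousOn)).intervalIntegrable)
      intro t ht
      calc |h t| ≤ c * |t - t₀| ^ k := hb t ht
        _ = c * (t₀ - t) ^ k := by rw [abs_sub_comm, abs_of_nonneg (by linarith [ht.2])]
    have hval : (∫ t in s..t₀, c * (t₀ - t) ^ k) = c * (t₀ - s) ^ (k + 1) / (k + 1) := by
      rw [intervalIntegral.integral_const_mul]
      have := intervalIntegral.integral_comp_sub_left (a := s) (b := t₀) (fun u => u ^ k) t₀
      rw [this, sub_self, integral_pow]
      push_cast; ring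
    rw [abs_sub_comm, abs_of_nonneg (by linarith : (0:ℝ) ≤ t₀ - s)]
    calc |∫ t in s..t₀, h t| ≤ ∫ t in s..t₀, |h t| := habs
      _ ≤ _ := hmono
      _ = _ := hval


section Pic
variable (Q : ℝ → ℝ) (a b t₀ a₀ b₀ : ℝ)

noncomputable def picT (hQ : Continuous Q) (hab : a ≤ b) (f : C(Set.Icc a b, ℝ)) :
    C(Set.Icc a b, ℝ) :=
  ⟨fun s => a₀ + b₀ * ((s : ℝ) - t₀) -
      ∫ t in t₀..(s : ℝ), ((s : ℝ) - t) * (Q t * Set.IccExtend hab f t), by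
    have hg : Continuous fun t => Q t * Set.IccExtend hab f t :=
      hQ.mul f.continuous.Icc_extend'
    have hint : ∀ c d : ℝ, IntervalIntegrable (fun t => Q t * Set.IccExtend hab f t) volume c d :=
      fun c d => hg.intervalIntegrable c d
    have hint2 : ∀ c d : ℝ, IntervalIntegrable (fun t => t * (Q t * Set.IccExtend hab f t))
        volume c d := fun c d => (continuous_id.mul hg).intervalIntegrable c d
    have hF : Continuous fun s : ℝ => a₀ + b₀ * (s - t₀) -
        (s * (∫ t in t₀..s, Q t * Set.IccExtend hab f t) -
          ∫ t in t₀..s, t * (Q t * Set.IccExtend hab f t)) := by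
      apply Continuous.sub
      · exact continuous_const.add (continuous_const.mul (continuous_id.sub continuous_const))
      · exact (continuous_id.mul (intervalIntegral.continuous_primitive hint t₀)).sub
          (intervalIntegral.continuous_primitive hint2 t₀)
    have heq : ∀ s : ℝ, a₀ + b₀ * (s - t₀) -
        ∫ t in t₀..s, (s - t) * (Q t * Set.IccExtend hab f t) =
        a₀ + b₀ * (s - t₀) -
        (s * (∫ t in t₀..s, Q t * Set.IccExtend hab f t) -
          ∫ t in t₀..s, t * (Q t * Set.IccExtend hab f t)) := by
      intro s; rw [split_integral hg.continuousOn]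
    exact (hF.comp continuous_subtype_val).congr fun s => (heq s).symm⟩

variable {Q a b t₀ a₀ b₀}

lemma picT_iter_bound (hQ : Continuous Q) (hab : a ≤ b) (ht₀ : t₀ ∈ Set.Icc a b)
    {M : ℝ} (hM0 : 0 ≤ M) (hM : ∀ t ∈ Set.Icc a b, |Q t| ≤ M)
    (k : ℕ) (f g : C(Set.Icc a b, ℝ)) (s : Set.Icc a b) :
    |(picT Q a b t₀ a₀ b₀ hQ hab)^[k] f s - (picT Q a b t₀ a₀ b₀ hQ hab)^[k] g s| ≤
      (M * (b - a)) ^ k * |(s : ℝ) - t₀| ^ k / (Nat.factorial k) * dist f g := by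
  induction k generalizing s with
  | zero => simpa [Real.dist_eq] using ContinuousMap.dist_apply_le_dist (f := f) (g := g) s
  | succ k ih =>
    set T := picT Q a b t₀ a₀ b₀ hQ hab with hT
    set F := T^[k] f with hF
    set G := T^[k] g with hG
    have hRnn : (0:ℝ) ≤ b - a := by linarith [ht₀.1, ht₀.2]
    have hEF : Continuous (Set.IccExtend hab F) := F.continuous.Icc_extend'
    have hEG : Continuous (Set.IccExtend hab G) := G.continuous.Icc_extend'
    have hsub : Set.uIcc t₀ (s : ℝ) ⊆ Set.Icc a b := Set.uIcc_subset_Icc ht₀ s.2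
    have hi1 : IntervalIntegrable (fun t => ((s:ℝ) - t) * (Q t * Set.IccExtend hab (⇑F) t))
        volume t₀ (s:ℝ) := ((continuous_const.sub continuous_id).mul (hQ.mul hEF)).intervalIntegrable _ _
    have hi2 : IntervalIntegrable (fun t => ((s:ℝ) - t) * (Q t * Set.IccExtend hab (⇑G) t))
        volume t₀ (s:ℝ) := ((continuous_const.sub continuous_id).mul (hQ.mul hEG)).intervalIntegrable _ _
    have hsub2 : (∫ t in t₀..(s:ℝ), ((s:ℝ) - t) * (Q t * Set.IccExtend hab (⇑F) t)) -
        (∫ t in t₀..(s:ℝ), ((s:ℝ) - t) * (Q t * Set.IccExtend hab (⇑G) t)) =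
        ∫ t in t₀..(s:ℝ), ((s:ℝ) - t) * (Q t * (Set.IccExtend hab (⇑F) t - Set.IccExtend hab (⇑G) t)) := by
      rw [← intervalIntegral.integral_sub hi1 hi2]
      apply intervalIntegral.integral_congr
      intro t _
      ring
    -- difference of the two operator values
    have hdiff : T^[k+1] f s - T^[k+1] g s =
        -∫ t in t₀..(s : ℝ), ((s : ℝ) - t) *
          (Q t * (Set.IccExtend hab (⇑F) t - Set.IccExtend hab (⇑G) t)) := by
      rw [Function.iterate_succ_apply', Function.iterate_succ_apply', ← hF, ← hG, ← hsub2]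
      show (a₀ + b₀ * ((s : ℝ) - t₀) - ∫ t in t₀..(s : ℝ), ((s:ℝ) - t) * (Q t * Set.IccExtend hab (⇑F) t))
        - (a₀ + b₀ * ((s : ℝ) - t₀) - ∫ t in t₀..(s : ℝ), ((s:ℝ) - t) * (Q t * Set.IccExtend hab (⇑G) t)) = _
      ring
    rw [hdiff, abs_neg]
    have key := abs_integral_le_pow (t₀ := t₀) (s := (s:ℝ)) (k := k)
      (c := M * (b - a) * ((M * (b - a)) ^ k / (Nat.factorial k) * dist f g))
      (h := fun t => ((s : ℝ) - t) * (Q t * (Set.IccExtend hab F t - Set.IccExtend hab G t)))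
      (by positivity)
      (((continuous_const.sub continuous_id).mul (hQ.mul (hEF.sub hEG))).continuousOn)
      ?_
    · calc |∫ t in t₀..(s:ℝ), ((s : ℝ) - t) *
          (Q t * (Set.IccExtend hab F t - Set.IccExtend hab G t))| ≤
          M * (b - a) * ((M * (b - a)) ^ k / (Nat.factorial k) * dist f g) *
            |(s:ℝ) - t₀| ^ (k+1) / (k+1) := key
        _ = (M * (b - a)) ^ (k+1) * |(s : ℝ) - t₀| ^ (k+1) / (Nat.factorial (k+1)) * dist f g := by
          rw [Nat.factorial_succ, pow_succ]
          push_cast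
          field_simp
          ring
    · intro t ht
      have htm : t ∈ Set.Icc a b := hsub ht
      have h1 : |(s : ℝ) - t| ≤ b - a := by
        rw [abs_sub_le_iff]; constructor <;> [linarith [s.2.1, s.2.2, htm.1, htm.2];
          linarith [s.2.1, s.2.2, htm.1, htm.2]]
      have h2 : |Q t| ≤ M := hM t htm
      have h3 : |Set.IccExtend hab F t - Set.IccExtend hab G t| ≤
          (M * (b - a)) ^ k * |t - t₀| ^ k / (Nat.factorial k) * dist f g := by
        rw [Set.IccExtend_of_mem hab _ htm, Set.IccExtend_of_mem hab _ htm]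
        exact ih ⟨t, htm⟩
      calc |((s : ℝ) - t) * (Q t * (Set.IccExtend hab F t - Set.IccExtend hab G t))|
          = |(s : ℝ) - t| * (|Q t| * |Set.IccExtend hab F t - Set.IccExtend hab G t|) := by
            rw [abs_mul, abs_mul]
        _ ≤ (b - a) * (M * ((M * (b - a)) ^ k * |t - t₀| ^ k / (Nat.factorial k) * dist f g)) := by
            apply mul_le_mul h1 _ (by positivity) hRnn
            apply mul_le_mul h2 h3 (abs_nonneg _) hM0
        _ = M * (b - a) * ((M * (b - a)) ^ k / (Nat.factorial k) * dist f g) * |t - t₀| ^ k := by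
            ring
end Pic

section Pic2
variable {Q : ℝ → ℝ} {a b t₀ a₀ b₀ : ℝ}

lemma picT_exists_unique_fixed (hQ : Continuous Q) (hab : a ≤ b) (ht₀ : t₀ ∈ Set.Icc a b) :
    ∃ x : C(Set.Icc a b, ℝ), picT Q a b t₀ a₀ b₀ hQ hab x = x ∧
      ∀ y, picT Q a b t₀ a₀ b₀ hQ hab y = y → y = x := by
  obtain ⟨C, hC⟩ := isCompact_Icc.exists_bound_of_continuousOn hQ.continuousOn
  set M := max C 0 with hMdef
  have hM0 : 0 ≤ M := le_max_right _ _
  have hM : ∀ t ∈ Set.Icc a b, |Q t| ≤ M := fun t ht => le_trans (hC t ht) (le_max_left _ _)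
  have hRnn : (0:ℝ) ≤ b - a := by linarith [ht₀.1, ht₀.2]
  set T := picT Q a b t₀ a₀ b₀ hQ hab with hT
  -- uniform dist bound for iterates
  have hdist : ∀ k (f g : C(Set.Icc a b, ℝ)),
      dist (T^[k] f) (T^[k] g) ≤ (M * (b - a) * (b - a)) ^ k / (Nat.factorial k) * dist f g := by
    intro k f g
    rw [ContinuousMap.dist_le (by positivity)]
    intro s
    rw [Real.dist_eq]
    calc |T^[k] f s - T^[k] g s| ≤ (M * (b - a)) ^ k * |(s : ℝ) - t₀| ^ k / (Nat.factorial k) * dist f g :=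
        picT_iter_bound hQ hab ht₀ hM0 hM k f g s
      _ ≤ (M * (b - a) * (b - a)) ^ k / (Nat.factorial k) * dist f g := by
        have h1 : |(s:ℝ) - t₀| ≤ b - a := by
          rw [abs_sub_le_iff]
          constructor <;> [linarith [s.2.1, s.2.2, ht₀.1, ht₀.2]; linarith [s.2.1, s.2.2, ht₀.1, ht₀.2]]
        have : (M * (b - a)) ^ k * |(s:ℝ) - t₀| ^ k ≤ (M * (b - a) * (b - a)) ^ k := by
          rw [mul_pow (M * (b-a)) (b-a)]
          gcongr
        gcongr
  -- pick k with contraction constant < 1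
  obtain ⟨k, hk⟩ : ∃ k, (M * (b - a) * (b - a)) ^ k / (Nat.factorial k) < 1 :=
    ((FloorSemiring.tendsto_pow_div_factorial_atTop (K := ℝ)
      (M * (b - a) * (b - a))).eventually_lt_const (by norm_num : (0:ℝ) < 1)).exists
  set e : ℝ := (M * (b - a) * (b - a)) ^ k / (Nat.factorial k) with he
  have he0 : 0 ≤ e := by positivity
  have hlip : LipschitzWith e.toNNReal (T^[k]) := by
    apply LipschitzWith.of_dist_le_mul
    intro f g
    rw [Real.coe_toNNReal e he0]
    exact hdist k f g
  have hcontr : ContractingWith e.toNNReal (T^[k]) := by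
    constructor
    · rw [← Real.toNNReal_one]
      exact (Real.toNNReal_lt_toNNReal_iff (by norm_num)).mpr hk
    · exact hlip
  have hfixk : Function.IsFixedPt (T^[k]) (ContractingWith.fixedPoint (T^[k]) hcontr) :=
    hcontr.fixedPoint_isFixedPt
  set x := ContractingWith.fixedPoint (T^[k]) hcontr with hx
  have hTx : Function.IsFixedPt (T^[k]) (T x) := by
    show T^[k] (T x) = T x
    rw [← Function.iterate_succ_apply, Function.iterate_succ_apply', hfixk.eq]
  have hfix : T x = x := hcontr.fixedPoint_unique' hTx hfixk
  refine ⟨x, hfix, ?_⟩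
  intro y hy
  exact hcontr.fixedPoint_unique' (hy ▸ Function.IsFixedPt.iterate hy k) hfixk
end Pic2

section Pic3
variable {Q : ℝ → ℝ} {a b t₀ : ℝ}

lemma exists_intervalSol (hQ : Continuous Q) (hab : a ≤ b) (ht₀ : t₀ ∈ Set.Icc a b) (a₀ b₀ : ℝ) :
    ∃ y : ℝ → ℝ, Continuous y ∧ ∀ s ∈ Set.Icc a b,
      y s = a₀ + b₀ * (s - t₀) - ∫ t in t₀..s, (s - t) * (Q t * y t) := by
  obtain ⟨x, hfix, -⟩ := picT_exists_unique_fixed (a₀ := a₀) (b₀ := b₀) hQ hab ht₀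
  refine ⟨Set.IccExtend hab x, x.continuous.Icc_extend', ?_⟩
  intro s hs
  have h1 : Set.IccExtend hab (⇑x) s = x ⟨s, hs⟩ := Set.IccExtend_of_mem hab _ hs
  conv_lhs => rw [h1, ← hfix]
  rfl

lemma intervalSol_unique (hQ : Continuous Q) (hab : a ≤ b) (ht₀ : t₀ ∈ Set.Icc a b)
    {a₀ b₀ : ℝ} {y z : ℝ → ℝ}
    (hy : ContinuousOn y (Set.Icc a b)) (hz : ContinuousOn z (Set.Icc a b))
    (hey : ∀ s ∈ Set.Icc a b, y s = a₀ + b₀ * (s - t₀) - ∫ t in t₀..s, (s - t) * (Q t * y t))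
    (hez : ∀ s ∈ Set.Icc a b, z s = a₀ + b₀ * (s - t₀) - ∫ t in t₀..s, (s - t) * (Q t * z t)) :
    Set.EqOn y z (Set.Icc a b) := by
  obtain ⟨x, hfix, huniq⟩ := picT_exists_unique_fixed (a₀ := a₀) (b₀ := b₀) hQ hab ht₀
  have key : ∀ w : ℝ → ℝ, ContinuousOn w (Set.Icc a b) →
      (∀ s ∈ Set.Icc a b, w s = a₀ + b₀ * (s - t₀) - ∫ t in t₀..s, (s - t) * (Q t * w t)) →
      ∀ s (hs : s ∈ Set.Icc a b), w s = x ⟨s, hs⟩ := by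
    intro w hw hew
    have hfixw : picT Q a b t₀ a₀ b₀ hQ hab ⟨fun u => w u, hw.restrict⟩ =
        (⟨fun u => w u, hw.restrict⟩ : C(Set.Icc a b, ℝ)) := by
      ext u
      show a₀ + b₀ * ((u : ℝ) - t₀) -
          (∫ t in t₀..(u : ℝ), ((u : ℝ) - t) *
            (Q t * Set.IccExtend hab (fun v : Set.Icc a b => w v) t)) = w u
      have hic : (∫ t in t₀..(u : ℝ), ((u : ℝ) - t) *
            (Q t * Set.IccExtend hab (fun v : Set.Icc a b => w v) t)) =
          ∫ t in t₀..(u : ℝ), ((u : ℝ) - t) * (Q t * w t) := by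
        apply intervalIntegral.integral_congr
        intro t ht
        have htm := Set.uIcc_subset_Icc ht₀ u.2 ht
        show ((u:ℝ) - t) * (Q t * Set.IccExtend hab (fun v : Set.Icc a b => w v) t) = ((u:ℝ) - t) * (Q t * w t)
        rw [Set.IccExtend_of_mem hab (fun v : Set.Icc a b => w v) htm]
      rw [hic, ← hew u u.2]
    have hx := huniq _ hfixw
    intro s hs
    calc w s = (⟨fun u => w u, hw.restrict⟩ : C(Set.Icc a b, ℝ)) ⟨s, hs⟩ := rfl
      _ = x ⟨s, hs⟩ := by rw [hx]
  intro s hs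
  rw [key y hy hey s hs, key z hz hez s hs]

lemma exists_global_integral (hQ : Continuous Q) (t₀ a₀ b₀ : ℝ) :
    ∃ y : ℝ → ℝ, Continuous y ∧ ∀ s,
      y s = a₀ + b₀ * (s - t₀) - ∫ t in t₀..s, (s - t) * (Q t * y t) := by
  have hmem : ∀ n : ℕ, t₀ ∈ Set.Icc (t₀ - (n + 1)) (t₀ + (n + 1)) := by
    intro n
    constructor <;> nlinarith [Nat.cast_nonneg (α := ℝ) n]
  have hab : ∀ n : ℕ, t₀ - (n + 1) ≤ t₀ + (n + 1) := by
    intro n; nlinarith [Nat.cast_nonneg (α := ℝ) n]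
  choose Y hYc hYe using fun n : ℕ => exists_intervalSol hQ (hab n) (hmem n) a₀ b₀
  have hsubint : ∀ n m : ℕ, n ≤ m →
      Set.EqOn (Y n) (Y m) (Set.Icc (t₀ - (n + 1)) (t₀ + (n + 1))) := by
    intro n m hnm
    have hmc : (n : ℝ) ≤ m := Nat.cast_le.mpr hnm
    have hsub : Set.Icc (t₀ - (n + 1)) (t₀ + (n + 1)) ⊆ Set.Icc (t₀ - (m + 1)) (t₀ + (m + 1)) :=
      Set.Icc_subset_Icc (by linarith) (by linarith)
    exact intervalSol_unique hQ (hab n) (hmem n) (hYc n).continuousOn (hYc m).continuousOn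
      (hYe n) (fun s hs => hYe m s (hsub hs))
  have hcons : ∀ n m : ℕ, ∀ s, s ∈ Set.Icc (t₀ - (n + 1)) (t₀ + (n + 1)) →
      s ∈ Set.Icc (t₀ - (m + 1)) (t₀ + (m + 1)) → Y n s = Y m s := by
    intro n m s hn hm
    rcases le_total n m with h | h
    · exact hsubint n m h hn
    · exact (hsubint m n h hm).symm
  set N : ℝ → ℕ := fun s => Nat.ceil |s - t₀| with hN
  have hmemN : ∀ s : ℝ, s ∈ Set.Icc (t₀ - (N s + 1)) (t₀ + (N s + 1)) := by
    intro s
    have h1 : |s - t₀| ≤ N s := Nat.le_ceil _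
    have h2 := abs_le.mp h1
    constructor <;> [linarith [h2.1]; linarith [h2.2]]
  set y : ℝ → ℝ := fun s => Y (N s) s with hy
  have hagree : ∀ n : ℕ, ∀ s ∈ Set.Icc (t₀ - (n + 1)) (t₀ + (n + 1)), y s = Y n s :=
    fun n s hs => hcons (N s) n s (hmemN s) hs
  have hcont : Continuous y := by
    rw [continuous_iff_continuousAt]
    intro s
    set n := N s + 1 with hn
    have hopen : s ∈ Set.Ioo (t₀ - (n + 1)) (t₀ + (n + 1)) := by
      have h1 : |s - t₀| ≤ N s := Nat.le_ceil _
      have h2 := abs_le.mp h1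
      have : ((n : ℝ)) = (N s : ℝ) + 1 := by push_cast [hn]; ring
      constructor <;> [linarith [h2.1]; linarith [h2.2]]
    have hev : y =ᶠ[nhds s] Y n := by
      apply Filter.eventuallyEq_of_mem (isOpen_Ioo.mem_nhds hopen)
      intro t ht
      exact hagree n t (Set.Ioo_subset_Icc_self ht)
    exact (hYc n).continuousAt.congr hev.symm
  refine ⟨y, hcont, ?_⟩
  intro s
  set n := N s with hn
  have hs : s ∈ Set.Icc (t₀ - (n + 1)) (t₀ + (n + 1)) := hmemN s
  have hic : (∫ t in t₀..s, (s - t) * (Q t * Y n t)) = ∫ t in t₀..s, (s - t) * (Q t * y t) := by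
    apply intervalIntegral.integral_congr
    intro t ht
    have htm := Set.uIcc_subset_Icc (hmem n) hs ht
    show (s - t) * (Q t * Y n t) = (s - t) * (Q t * y t)
    rw [hagree n t htm]
  rw [hagree n s hs, hYe n s hs, hic]
end Pic3

section Reg
variable {Q : ℝ → ℝ}

lemma isSol_of_integral_eq (hQ : Continuous Q) {y : ℝ → ℝ} (hy : Continuous y) {t₀ a₀ b₀ : ℝ}
    (h : ∀ s, y s = a₀ + b₀ * (s - t₀) - ∫ t in t₀..s, (s - t) * (Q t * y t)) :
    IsSol Q y ∧ y t₀ = a₀ ∧ deriv y t₀ = b₀ := by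
  have hg : Continuous fun t => Q t * y t := hQ.mul hy
  set g : ℝ → ℝ := fun t => Q t * y t with hgdef
  set G : ℝ → ℝ := fun s => ∫ t in t₀..s, g t with hGdef
  set H : ℝ → ℝ := fun s => ∫ t in t₀..s, t * g t with hHdef
  have hmeas : ∀ s : ℝ, StronglyMeasurableAtFilter g (nhds s) volume := by
    intro s
    exact (hg.continuousOn).stronglyMeasurableAtFilter isOpen_univ s (Set.mem_univ s)
  have hmeas2 : ∀ s : ℝ, StronglyMeasurableAtFilter (fun t => t * g t) (nhds s) volume := by
    intro s
    exact ((continuous_id.mul hg).continuousOn).stronglyMeasurableAtFilter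
      isOpen_univ s (Set.mem_univ s)
  have hG : ∀ s, HasDerivAt G (g s) s := fun s =>
    intervalIntegral.integral_hasDerivAt_right (hg.intervalIntegrable _ _) (hmeas s) hg.continuousAt
  have hH : ∀ s, HasDerivAt H (s * g s) s := fun s =>
    intervalIntegral.integral_hasDerivAt_right ((continuous_id.mul hg).intervalIntegrable _ _)
      (hmeas2 s) (continuous_id.mul hg).continuousAt
  have hform : y = fun s => a₀ + b₀ * (s - t₀) - (s * G s - H s) := by
    funext s
    rw [h s, split_integral hg.continuousOn]
  have hyd : ∀ s, HasDerivAt y (b₀ - G s) s := by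
    intro s
    rw [hform]
    have h1 : HasDerivAt (fun u : ℝ => a₀ + b₀ * (u - t₀)) b₀ s := by
      simpa using (((hasDerivAt_id s).sub_const t₀).const_mul b₀).const_add a₀
    have h2 : HasDerivAt (fun u => u * G u) (1 * G s + s * g s) s := (hasDerivAt_id s).mul (hG s)
    have h3 := (h1.sub (h2.sub (hH s)))
    refine h3.congr_deriv ?_
    ring
  have hder : deriv y = fun s => b₀ - G s := funext fun s => (hyd s).deriv
  have hyd2 : ∀ s, HasDerivAt (deriv y) (-g s) s := by
    intro s
    rw [hder]
    exact (hG s).const_sub b₀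
  refine ⟨⟨fun s => (hyd s).differentiableAt, fun s => (hyd2 s).differentiableAt, ?_⟩, ?_, ?_⟩
  · intro s
    rw [(hyd2 s).deriv]
    simp [hgdef]
  · rw [h t₀]
    simp
  · rw [hder]
    simp [hGdef]

lemma integral_eq_of_ode (hQ : Continuous Q) {f f' : ℝ → ℝ} {t₀ s : ℝ} {U : Set ℝ} (hU : IsOpen U)
    (hsub : Set.uIcc t₀ s ⊆ U) (hf : ∀ t ∈ U, HasDerivAt f (f' t) t)
    (hf' : ∀ t ∈ U, HasDerivAt f' (-(Q t * f t)) t) :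
    f s = f t₀ + f' t₀ * (s - t₀) - ∫ t in t₀..s, (s - t) * (Q t * f t) := by
  have hfc : ContinuousOn f U := fun t ht => ((hf t ht).continuousAt).continuousWithinAt
  have hΦ : ∀ t ∈ Set.uIcc t₀ s, HasDerivAt (fun u => (s - u) * f' u + f u)
      ((s - t) * (-(Q t * f t))) t := by
    intro t ht
    have h1 : HasDerivAt (fun u : ℝ => s - u) (-1) t := by
      simpa using (hasDerivAt_id t).const_sub s
    have h2 := (h1.mul (hf' t (hsub ht))).add (hf t (hsub ht))
    refine h2.congr_deriv ?_
    ring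
  have hint : IntervalIntegrable (fun t => (s - t) * (-(Q t * f t))) volume t₀ s :=
    (((continuous_const.sub continuous_id).continuousOn).mul
      ((hQ.continuousOn.mul (hfc.mono hsub)).neg)).intervalIntegrable
  have hkey := intervalIntegral.integral_eq_sub_of_hasDerivAt hΦ hint
  have hneg : (∫ t in t₀..s, (s - t) * (-(Q t * f t))) =
      -∫ t in t₀..s, (s - t) * (Q t * f t) := by
    rw [← intervalIntegral.integral_neg]
    apply intervalIntegral.integral_congr
    intro t _
    ring
  rw [hneg] at hkey
  have h0 : ((s - s) * f' s + f s) - ((s - t₀) * f' t₀ + f t₀) = f s - ((s - t₀) * f' t₀ + f t₀) := by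
    ring
  rw [h0] at hkey
  linarith [hkey]

lemma exists_sol_with_data (hQ : Continuous Q) (t₀ a₀ b₀ : ℝ) :
    ∃ y : ℝ → ℝ, IsSol Q y ∧ y t₀ = a₀ ∧ deriv y t₀ = b₀ := by
  obtain ⟨y, hc, he⟩ := exists_global_integral hQ t₀ a₀ b₀
  exact ⟨y, isSol_of_integral_eq hQ hc he⟩

lemma isSol_integral_eq (hQ : Continuous Q) {y : ℝ → ℝ} (hy : IsSol Q y) (t₀ s : ℝ) :
    y s = y t₀ + deriv y t₀ * (s - t₀) - ∫ t in t₀..s, (s - t) * (Q t * y t) := by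
  apply integral_eq_of_ode hQ isOpen_univ (Set.subset_univ _)
  · exact fun t _ => (hy.1 t).hasDerivAt
  · intro t _
    have := (hy.2.1 t).hasDerivAt
    have he : deriv (deriv y) t = -(Q t * y t) := by linarith [hy.2.2 t]
    rwa [he] at this

/-- Global uniqueness: two solutions with the same initial data agree everywhere. -/
lemma sol_unique (hQ : Continuous Q) {y z : ℝ → ℝ} (hy : IsSol Q y) (hz : IsSol Q z)
    (t₀ : ℝ) (h0 : y t₀ = z t₀) (h1 : deriv y t₀ = deriv z t₀) : ∀ s, y s = z s := by
  intro s
  set r : ℝ := |s - t₀| + 1 with hr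
  have habs : |s - t₀| ≤ r := by rw [hr]; linarith
  have h2 := abs_le.mp habs
  have hrange : t₀ - r ≤ t₀ + r := by linarith [abs_nonneg (s - t₀)]
  have hmem : t₀ ∈ Set.Icc (t₀ - r) (t₀ + r) := by
    constructor <;> linarith [abs_nonneg (s - t₀)]
  have hs : s ∈ Set.Icc (t₀ - r) (t₀ + r) := by
    constructor <;> [linarith [h2.1]; linarith [h2.2]]
  exact intervalSol_unique hQ hrange hmem (hy.1.continuous.continuousOn)
    (hz.1.continuous.continuousOn)
    (fun σ _ => isSol_integral_eq hQ hy t₀ σ)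
    (fun σ _ => by rw [isSol_integral_eq hQ hz t₀ σ, ← h0, ← h1]) hs
end Reg

section ODE
variable {Q : ℝ → ℝ}

lemma isSol_deriv2 {y : ℝ → ℝ} (hy : IsSol Q y) : ∀ s, deriv (deriv y) s = -(Q s * y s) :=
  fun s => by linarith [hy.2.2 s]

lemma isSol_comb {y z : ℝ → ℝ} (hy : IsSol Q y) (hz : IsSol Q z) (c d : ℝ) :
    IsSol Q (fun s => c * y s + d * z s) ∧
      deriv (fun s => c * y s + d * z s) = fun s => c * deriv y s + d * deriv z s := by
  have hd : ∀ s, HasDerivAt (fun s => c * y s + d * z s)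
      (c * deriv y s + d * deriv z s) s := fun s =>
    (((hy.1 s).hasDerivAt.const_mul c).add ((hz.1 s).hasDerivAt.const_mul d))
  have hder : deriv (fun s => c * y s + d * z s) = fun s => c * deriv y s + d * deriv z s :=
    funext fun s => (hd s).deriv
  have hd2 : ∀ s, HasDerivAt (fun s => c * deriv y s + d * deriv z s)
      (c * deriv (deriv y) s + d * deriv (deriv z) s) s := fun s =>
    (((hy.2.1 s).hasDerivAt.const_mul c).add ((hz.2.1 s).hasDerivAt.const_mul d))
  refine ⟨⟨fun s => (hd s).differentiableAt, ?_, ?_⟩, hder⟩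
  · rw [hder]; exact fun s => (hd2 s).differentiableAt
  · intro s
    rw [hder, (hd2 s).deriv]
    have e1 := hy.2.2 s
    have e2 := hz.2.2 s
    show c * deriv (deriv y) s + d * deriv (deriv z) s + Q s * (c * y s + d * z s) = 0
    linear_combination c * e1 + d * e2

lemma isSol_zero : IsSol Q (fun _ => (0:ℝ)) := by
  refine ⟨differentiable_const 0, ?_, ?_⟩ <;> simp [deriv_const']

lemma isSol_eq_zero (hQ : Continuous Q) {y : ℝ → ℝ} (hy : IsSol Q y) (t₁ : ℝ)
    (h0 : y t₁ = 0) (h1 : deriv y t₁ = 0) : ∀ s, y s = 0 := by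
  have h := sol_unique hQ hy isSol_zero t₁ (by simpa using h0) (by simp [h1, deriv_const'])
  simpa using h

lemma wronskian_const {y₁ y₂ : ℝ → ℝ} (hy : IsSol Q y₁) (hz : IsSol Q y₂) (s s' : ℝ) :
    y₁ s * deriv y₂ s - y₂ s * deriv y₁ s = y₁ s' * deriv y₂ s' - y₂ s' * deriv y₁ s' := by
  set W : ℝ → ℝ := fun u => y₁ u * deriv y₂ u - y₂ u * deriv y₁ u with hW
  have hWd : ∀ u, HasDerivAt W 0 u := by
    intro u
    have h1 := ((hy.1 u).hasDerivAt.mul (hz.2.1 u).hasDerivAt).sub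
      ((hz.1 u).hasDerivAt.mul (hy.2.1 u).hasDerivAt)
    refine h1.congr_deriv ?_
    rw [isSol_deriv2 hy u, isSol_deriv2 hz u]
    ring
  exact is_const_of_deriv_eq_zero (fun u => (hWd u).differentiableAt) (fun u => (hWd u).deriv) s s'
end ODE

section Ratio
variable {Q : ℝ → ℝ}

lemma ratio_tendsto (hQ : Continuous Q) {y₂ : ℝ → ℝ} (h2 : IsSol Q y₂) {s₀ : ℝ}
    (hnz : ∀ s, s₀ ≤ s → y₂ s ≠ 0)
    (hdiv : Tendsto (fun s => ∫ t in s₀..s, ((y₂ t) ^ 2)⁻¹) atTop atTop)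
    {y₁ : ℝ → ℝ} (h1 : IsSol Q y₁)
    (hW : ∀ s, y₁ s * deriv y₂ s - y₂ s * deriv y₁ s ≠ 0) :
    Tendsto (fun s => y₂ s / y₁ s) atTop (nhds 0) := by
  set c := y₁ s₀ * deriv y₂ s₀ - y₂ s₀ * deriv y₁ s₀ with hcdef
  have hc : c ≠ 0 := hW s₀
  have hWc : ∀ s, y₁ s * deriv y₂ s - y₂ s * deriv y₁ s = c := fun s => wronskian_const h1 h2 s s₀
  set σ : ℝ → ℝ := fun s => y₁ s / y₂ s with hσdef
  set A : ℝ → ℝ := fun s => ∫ t in s₀..s, ((y₂ t) ^ 2)⁻¹ with hAdef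
  have hσd : ∀ s, s₀ ≤ s → HasDerivAt σ (-c * ((y₂ s) ^ 2)⁻¹) s := by
    intro s hs
    have h := (h1.1 s).hasDerivAt.div (h2.1 s).hasDerivAt (hnz s hs)
    have hnum : deriv y₁ s * y₂ s - y₁ s * deriv y₂ s = -c := by linarith [hWc s]
    rw [hnum] at h
    exact h.congr_deriv (div_eq_mul_inv _ _).symm
  have hA : ∀ s, s₀ ≤ s → σ s = σ s₀ - c * A s := by
    intro s hs
    have hsub : Set.uIcc s₀ s ⊆ Set.Ici s₀ := by
      rw [Set.uIcc_of_le hs]; exact Set.Icc_subset_Ici_self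
    have hderiv : ∀ t ∈ Set.uIcc s₀ s, HasDerivAt σ (-c * ((y₂ t) ^ 2)⁻¹) t :=
      fun t ht => hσd t (hsub ht)
    have hcont : ContinuousOn (fun t => -c * ((y₂ t) ^ 2)⁻¹) (Set.uIcc s₀ s) := by
      apply continuousOn_const.mul
      exact ((h2.1.continuous.pow 2).continuousOn).inv₀
        fun t ht => pow_ne_zero 2 (hnz t (hsub ht))
    have hkey := intervalIntegral.integral_eq_sub_of_hasDerivAt hderiv hcont.intervalIntegrable
    rw [intervalIntegral.integral_const_mul] at hkey
    have : -c * A s = σ s - σ s₀ := by rw [hAdef]; exact hkey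
    linarith [this]
  have hev : ∀ᶠ s in atTop, σ s = σ s₀ - c * A s := (eventually_ge_atTop s₀).mono hA
  have htend : Tendsto (fun s => (σ s)⁻¹) atTop (nhds 0) := by
    rcases lt_or_gt_of_ne hc with hneg | hpos
    · have hA1 : Tendsto (fun s => (-c) * A s) atTop atTop :=
        hdiv.const_mul_atTop (by linarith)
      have hA2 : Tendsto (fun s => σ s₀ + (-c) * A s) atTop atTop :=
        tendsto_atTop_add_const_left _ _ hA1
      have hA3 : Tendsto σ atTop atTop :=
        hA2.congr' (hev.mono fun s h => by rw [h]; ring)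
      exact hA3.inv_tendsto_atTop
    · have hA1 : Tendsto (fun s => c * A s) atTop atTop := hdiv.const_mul_atTop hpos
      have hA2 : Tendsto (fun s => -σ s₀ + c * A s) atTop atTop :=
        tendsto_atTop_add_const_left _ _ hA1
      have hneg' : Tendsto (fun s => -σ s) atTop atTop :=
        hA2.congr' (hev.mono fun s h => by show -σ s₀ + c * A s = -σ s; rw [h]; ring)
      have h5 := hneg'.inv_tendsto_atTop.neg
      rw [neg_zero] at h5
      refine h5.congr fun s => ?_
      show -((-σ s)⁻¹) = (σ s)⁻¹
      rw [inv_neg, neg_neg]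
  have hfun : (fun s => y₂ s / y₁ s) = fun s => (σ s)⁻¹ := by
    funext s
    rw [hσdef]
    show y₂ s / y₁ s = (y₁ s / y₂ s)⁻¹
    rw [inv_div]
  rw [hfun]
  exact htend
end Ratio

section Uniq
variable {Q : ℝ → ℝ}

lemma unique_part (hQ : Continuous Q)
    (hnonosc : ∀ y, IsSol Q y → y ≠ 0 → ∃ s₀ : ℝ, ∀ s ≥ s₀, y s ≠ 0)
    {y₂ : ℝ → ℝ} (h2 : IsSol Q y₂) (h2ne : y₂ ≠ 0)
    (hprin : ∀ y₁, IsSol Q y₁ → (∀ s, y₁ s * deriv y₂ s - y₂ s * deriv y₁ s ≠ 0) →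
        Tendsto (fun s => y₂ s / y₁ s) atTop (nhds 0)) :
    ∀ z, IsSol Q z → z ≠ 0 →
      (∀ y₁, IsSol Q y₁ → (∀ s, y₁ s * deriv z s - z s * deriv y₁ s ≠ 0) →
        Tendsto (fun s => z s / y₁ s) atTop (nhds 0)) →
      ∃ k : ℝ, k ≠ 0 ∧ ∀ s, z s = k * y₂ s := by
  intro z hz hzne hzprin
  obtain ⟨s₂, hs₂⟩ := hnonosc y₂ h2 h2ne
  obtain ⟨s₃, hs₃⟩ := hnonosc z hz hzne
  set c := y₂ 0 * deriv z 0 - z 0 * deriv y₂ 0 with hcdef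
  have hWc : ∀ s, y₂ s * deriv z s - z s * deriv y₂ s = c := fun s => wronskian_const h2 hz s 0
  by_cases hc : c = 0
  · have hy2s2 : y₂ s₂ ≠ 0 := hs₂ s₂ le_rfl
    set k := z s₂ / y₂ s₂ with hk
    obtain ⟨hw, hwder⟩ := isSol_comb hz h2 1 (-k)
    have hw0 : (fun s => 1 * z s + (-k) * y₂ s) s₂ = 0 := by
      show 1 * z s₂ + (-k) * y₂ s₂ = 0
      rw [hk]
      field_simp
      ring
    have hwd0 : deriv (fun s => 1 * z s + (-k) * y₂ s) s₂ = 0 := by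
      rw [hwder]
      show 1 * deriv z s₂ + (-k) * deriv y₂ s₂ = 0
      have hWs := hWc s₂
      rw [hc] at hWs
      rw [hk]
      field_simp
      linarith [hWs]
    have hzero := isSol_eq_zero hQ hw s₂ hw0 hwd0
    refine ⟨k, ?_, ?_⟩
    · intro hk0
      apply hzne
      funext s
      have hzs := hzero s
      rw [hk0] at hzs
      simpa using hzs
    · intro s
      have hzs := hzero s
      linarith [hzs]
  · have t1 : Tendsto (fun s => z s / y₂ s) atTop (nhds 0) :=
      hzprin y₂ h2 (fun s => by rw [hWc s]; exact hc)
    have t2 : Tendsto (fun s => y₂ s / z s) atTop (nhds 0) := by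
      apply hprin z hz
      intro s
      have hval : z s * deriv y₂ s - y₂ s * deriv z s = -c := by linarith [hWc s]
      rw [hval]
      exact neg_ne_zero.mpr hc
    have t3 := t1.mul t2
    rw [mul_zero] at t3
    have hev : ∀ᶠ s in atTop, (z s / y₂ s) * (y₂ s / z s) = 1 := by
      filter_upwards [eventually_ge_atTop s₂, eventually_ge_atTop s₃] with s hu hv
      have hy := hs₂ s hu
      have hzn := hs₃ s hv
      field_simp
    have t4 : Tendsto (fun _ : ℝ => (1:ℝ)) atTop (nhds 0) := t3.congr' hev
    have hbad := tendsto_nhds_unique t4 tendsto_const_nhds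
    norm_num at hbad
end Uniq


/-- Existence and essential uniqueness of the principal solution of a
nonoscillatory equation `y'' + Q y = 0` at `+∞`. -/
theorem principal_solution_exists_unique (Q : ℝ → ℝ) (hQ : Continuous Q)
    (hnonosc : ∀ y, IsSol Q y → y ≠ 0 → ∃ s₀ : ℝ, ∀ s ≥ s₀, y s ≠ 0) :
    ∃ y₂, IsSol Q y₂ ∧ y₂ ≠ 0 ∧
      (∀ y₁, IsSol Q y₁ → (∀ s, y₁ s * deriv y₂ s - y₂ s * deriv y₁ s ≠ 0) →
        Tendsto (fun s => y₂ s / y₁ s) atTop (nhds 0)) ∧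
      (∀ z, IsSol Q z → z ≠ 0 →
        (∀ y₁, IsSol Q y₁ → (∀ s, y₁ s * deriv z s - z s * deriv y₁ s ≠ 0) →
          Tendsto (fun s => z s / y₁ s) atTop (nhds 0)) →
        ∃ k : ℝ, k ≠ 0 ∧ ∀ s, z s = k * y₂ s) := by
  obtain ⟨u, hu, hu0, -⟩ := exists_sol_with_data hQ 0 1 0
  have hune : u ≠ 0 := by
    intro h
    rw [h] at hu0
    simpa using hu0
  obtain ⟨s₀, hs₀⟩ := hnonosc u hu hune
  have hucont : Continuous u := hu.1.continuous
  set A : ℝ → ℝ := fun s => ∫ t in s₀..s, ((u t) ^ 2)⁻¹ with hAdef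
  have hint : ∀ p q : ℝ, s₀ ≤ p → s₀ ≤ q →
      IntervalIntegrable (fun t => ((u t) ^ 2)⁻¹) MeasureTheory.volume p q := by
    intro p q hp hq
    apply ContinuousOn.intervalIntegrable
    apply ((hucont.pow 2).continuousOn).inv₀
    intro t ht
    have : s₀ ≤ t := le_trans (le_min hp hq) ht.1
    exact pow_ne_zero 2 (hs₀ t this)
  have hAc : ∀ s s' : ℝ, s₀ ≤ s → s ≤ s' → A s ≤ A s' := by
    intro s s' h1 h2
    have hadd := intervalIntegral.integral_add_adjacent_intervals
      (hint s₀ s le_rfl h1) (hint s s' h1 (le_trans h1 h2))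
    have hnn : (0:ℝ) ≤ ∫ t in s..s', ((u t) ^ 2)⁻¹ :=
      intervalIntegral.integral_nonneg h2 (fun t _ => by positivity)
    show A s ≤ A s'
    rw [hAdef]
    simp only []
    linarith [hadd, hnn]
  have hstrict : ∀ s, s₀ ≤ s → A s < A (s + 1) := by
    intro s hs
    have hadd := intervalIntegral.integral_add_adjacent_intervals
      (hint s₀ s le_rfl hs) (hint s (s + 1) hs (by linarith))
    have hpos : (0:ℝ) < ∫ t in s..(s + 1), ((u t) ^ 2)⁻¹ := by
      apply intervalIntegral.intervalIntegral_pos_of_pos_on (hint s (s+1) hs (by linarith))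
      · intro t ht
        have hne : u t ≠ 0 := hs₀ t (by linarith [ht.1])
        have : (0:ℝ) < (u t) ^ 2 := lt_of_le_of_ne (sq_nonneg _) (Ne.symm (pow_ne_zero 2 hne))
        exact inv_pos.mpr this
      · linarith
    show A s < A (s + 1)
    rw [hAdef]
    simp only []
    linarith [hadd, hpos]
  by_cases hbd : ∃ bd : ℝ, ∀ s, s₀ ≤ s → A s ≤ bd
  case neg =>
    push_neg at hbd
    have hdiv : Tendsto A atTop atTop := by
      rw [tendsto_atTop]
      intro bd
      obtain ⟨s₁, hs₁, hb⟩ := hbd bd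
      filter_upwards [eventually_ge_atTop s₁, eventually_ge_atTop s₀] with s h1 h2
      exact le_trans hb.le (hAc s₁ s hs₁ h1)
    have hprin : ∀ y₁, IsSol Q y₁ → (∀ s, y₁ s * deriv u s - u s * deriv y₁ s ≠ 0) →
        Tendsto (fun s => u s / y₁ s) atTop (nhds 0) :=
      fun y₁ h1 hW => ratio_tendsto hQ hu (fun s hs => hs₀ s hs) hdiv h1 hW
    exact ⟨u, hu, hune, hprin, unique_part hQ hnonosc hu hune hprin⟩
  case pos =>
    obtain ⟨bd, hbdle⟩ := hbd
    have hne : (A '' Set.Ici s₀).Nonempty := ⟨A s₀, Set.mem_image_of_mem A Set.self_mem_Ici⟩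
    have hbdd : BddAbove (A '' Set.Ici s₀) := by
      refine ⟨bd, ?_⟩
      rintro x ⟨s, hs, rfl⟩
      exact hbdle s hs
    set L := sSup (A '' Set.Ici s₀) with hLdef
    have hle : ∀ s, s₀ ≤ s → A s ≤ L := fun s hs => le_csSup hbdd (Set.mem_image_of_mem A hs)
    have hlt : ∀ s, s₀ ≤ s → A s < L :=
      fun s hs => lt_of_lt_of_le (hstrict s hs) (hle (s + 1) (by linarith))
    obtain ⟨v, hv, hv0, hv1⟩ := exists_sol_with_data hQ s₀ 0 ((u s₀)⁻¹)
    obtain ⟨hy₂sol, hy₂der⟩ := isSol_comb hv hu (-1) L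
    set y₂ : ℝ → ℝ := fun s => (-1) * v s + L * u s with hy₂def
    -- a neighborhood of the ray where u ≠ 0
    obtain ⟨δ, hδpos, hball⟩ : ∃ δ > 0, ∀ t, dist t s₀ < δ → u t ≠ 0 := by
      have hev := hucont.continuousAt.eventually_ne (hs₀ s₀ le_rfl)
      rw [Metric.eventually_nhds_iff] at hev
      obtain ⟨ε, hε, h⟩ := hev
      exact ⟨ε, hε, fun t ht => h ht⟩
    set U : Set ℝ := Set.Ioi (s₀ - δ) with hUdef
    have hUopen : IsOpen U := isOpen_Ioi
    have hUne : ∀ t ∈ U, u t ≠ 0 := by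
      intro t ht
      rcases le_or_gt s₀ t with h | h
      · exact hs₀ t h
      · apply hball
        rw [Real.dist_eq, abs_of_nonpos (by linarith)]
        have : s₀ - δ < t := ht
        linarith
    have hsubU : Set.Ici s₀ ⊆ U := fun t ht => by
      show s₀ - δ < t
      have : s₀ ≤ t := ht
      linarith
    have hcontInv : ContinuousOn (fun τ => ((u τ) ^ 2)⁻¹) U :=
      ((hucont.pow 2).continuousOn).inv₀ fun τ hτ => pow_ne_zero 2 (hUne τ hτ)
    have huIccU : ∀ t : ℝ, t ∈ U → Set.uIcc s₀ t ⊆ U := by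
      intro t ht τ hτ
      show s₀ - δ < τ
      have h1 : min s₀ t ≤ τ := hτ.1
      have h2 : s₀ - δ < min s₀ t := lt_min (by linarith) ht
      linarith
    have hAd : ∀ t ∈ U, HasDerivAt A (((u t) ^ 2)⁻¹) t := by
      intro t ht
      apply intervalIntegral.integral_hasDerivAt_right
      · exact ((hcontInv.mono (huIccU t ht))).intervalIntegrable
      · exact hcontInv.stronglyMeasurableAtFilter hUopen t ht
      · exact hcontInv.continuousAt (hUopen.mem_nhds ht)
    have hwd : ∀ t ∈ U, HasDerivAt (fun τ => u τ * A τ) (deriv u t * A t + (u t)⁻¹) t := by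
      intro t ht
      have h := (hu.1 t).hasDerivAt.mul (hAd t ht)
      refine h.congr_deriv ?_
      have hne := hUne t ht
      rw [pow_two]
      field_simp
    have hwd2 : ∀ t ∈ U, HasDerivAt (fun τ => deriv u τ * A τ + (u τ)⁻¹)
        (-(Q t * (u t * A t))) t := by
      intro t ht
      have h1 := (hu.2.1 t).hasDerivAt.mul (hAd t ht)
      have h2 := ((hu.1 t).hasDerivAt).inv (hUne t ht)
      have h3 := h1.add h2
      refine h3.congr_deriv ?_
      rw [isSol_deriv2 hu t]
      field_simp
      rw [div_eq_iff (pow_ne_zero 2 (hUne t ht))]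
      ring
    have hA0 : A s₀ = 0 := intervalIntegral.integral_same
    have hweq : ∀ s, s₀ ≤ s → u s * A s =
        0 + (u s₀)⁻¹ * (s - s₀) - ∫ t in s₀..s, (s - t) * (Q t * (u t * A t)) := by
      intro s hs
      have hsubI : Set.uIcc s₀ s ⊆ U := by
        rw [Set.uIcc_of_le hs]
        exact fun τ hτ => hsubU (le_trans hτ.1 le_rfl : s₀ ≤ τ)
      have hkey := integral_eq_of_ode hQ hUopen hsubI hwd hwd2
      rw [hkey, hA0]
      simp
    have hveq : ∀ s : ℝ, v s = 0 + (u s₀)⁻¹ * (s - s₀) - ∫ t in s₀..s, (s - t) * (Q t * v t) := by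
      intro s
      have h := isSol_integral_eq hQ hv s₀ s
      rw [hv0, hv1] at h
      exact h
    have hvw : ∀ s, s₀ ≤ s → v s = u s * A s := by
      intro s hs
      have hcw : ContinuousOn (fun τ => u τ * A τ) (Set.Icc s₀ s) := by
        intro t ht
        exact ((hwd t (hsubU ht.1)).continuousAt).continuousWithinAt
      have := intervalSol_unique (a := s₀) (b := s) hQ hs ⟨le_rfl, hs⟩
        (hv.1.continuous.continuousOn) hcw
        (fun σ _ => hveq σ) (fun σ hσ => hweq σ hσ.1) ⟨hs, le_rfl⟩
      exact this
    have hy₂ray : ∀ s, s₀ ≤ s → y₂ s = u s * (L - A s) := by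
      intro s hs
      show (-1) * v s + L * u s = u s * (L - A s)
      rw [hvw s hs]
      ring
    have hy₂ne : ∀ s, s₀ ≤ s → y₂ s ≠ 0 := by
      intro s hs
      rw [hy₂ray s hs]
      exact mul_ne_zero (hs₀ s hs) (sub_pos.mpr (hlt s hs)).ne'
    have hy₂fne : y₂ ≠ 0 := by
      intro h
      apply hy₂ne s₀ le_rfl
      rw [h]
      rfl
    -- divergence of the y₂ reciprocal-square integral
    have hBeq : ∀ s, s₀ ≤ s →
        (∫ t in s₀..s, ((y₂ t) ^ 2)⁻¹) = (L - A s)⁻¹ - L⁻¹ := by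
      intro s hs
      have hder : ∀ t ∈ Set.uIcc s₀ s, HasDerivAt (fun τ => (L - A τ)⁻¹) (((y₂ t) ^ 2)⁻¹) t := by
        intro t ht
        rw [Set.uIcc_of_le hs] at ht
        have htI : s₀ ≤ t := ht.1
        have htU : t ∈ U := hsubU htI
        have hLA : L - A t ≠ 0 := (sub_pos.mpr (hlt t htI)).ne'
        have h1 : HasDerivAt (fun τ => L - A τ) (-((u t) ^ 2)⁻¹) t := by
          simpa using (hAd t htU).const_sub L
        have h2 := h1.inv hLA
        refine h2.congr_deriv ?_
        rw [hy₂ray t htI]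
        have hu2 : u t ≠ 0 := hs₀ t htI
        field_simp
      have hcont2 : ContinuousOn (fun t => ((y₂ t) ^ 2)⁻¹) (Set.uIcc s₀ s) := by
        rw [Set.uIcc_of_le hs]
        apply ((hy₂sol.1.continuous.pow 2).continuousOn).inv₀
        intro t ht
        exact pow_ne_zero 2 (hy₂ne t ht.1)
      have hkey := intervalIntegral.integral_eq_sub_of_hasDerivAt hder hcont2.intervalIntegrable
      rw [hkey, hA0, sub_zero]
    have hdivB : Tendsto (fun s => ∫ t in s₀..s, ((y₂ t) ^ 2)⁻¹) atTop atTop := by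
      have hLA : Tendsto (fun s => L - A s) atTop (nhdsWithin 0 (Set.Ioi 0)) := by
        rw [tendsto_nhdsWithin_iff]
        constructor
        · rw [tendsto_order]
          constructor
          · intro a ha
            filter_upwards [eventually_ge_atTop s₀] with s hs
            have := hlt s hs
            linarith
          · intro a ha
            obtain ⟨x, hx, hxa⟩ := exists_lt_of_lt_csSup hne (by linarith : L - a < L)
            obtain ⟨s₁, hs₁, rfl⟩ := hx
            filter_upwards [eventually_ge_atTop s₁, eventually_ge_atTop s₀] with s h1 h2
            have := hAc s₁ s hs₁ h1
            linarith
        · filter_upwards [eventually_ge_atTop s₀] with s hs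
          exact sub_pos.mpr (hlt s hs)
      have h6 := tendsto_inv_nhdsGT_zero.comp hLA
      have h7 : Tendsto (fun s : ℝ => (L - A s)⁻¹ + (-L⁻¹)) atTop atTop :=
        tendsto_atTop_add_const_right _ _ h6
      apply h7.congr'
      filter_upwards [eventually_ge_atTop s₀] with s hs
      rw [hBeq s hs]
      ring
    have hprin : ∀ y₁, IsSol Q y₁ → (∀ s, y₁ s * deriv y₂ s - y₂ s * deriv y₁ s ≠ 0) →
        Tendsto (fun s => y₂ s / y₁ s) atTop (nhds 0) :=
      fun y₁ h1 hW => ratio_tendsto hQ hy₂sol hy₂ne hdivB h1 hW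
    exact ⟨y₂, hy₂sol, hy₂fne, hprin, unique_part hQ hnonosc hy₂sol hy₂fne hprin⟩
end

section
/- (Sturm comparison of logarithmic derivatives) Let Q₁, Q₂ : ℝ → ℝ be continuous with Q₁(s) ≥ Q₂(s) for all s ≥ a. Let y₁ solve y'' + Q₁·y = 0 and y₂ solve y'' + Q₂·y = 0, with y₁(s) ≠ 0 and y₂(s) ≠ 0 on (a, ∞). If y₁'(a)/y₁(a) ≤ y₂'(a)/y₂(a), then y₁'(s)/y₁(s) ≤ y₂'(s)/y₂(s) for all s > a. -/
/-- A continuous function nonvanishing on `Ici a` and positive at `a` is positive on `Ici a`. -/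
lemma sturm_aux_sign_pos (f : ℝ → ℝ) (a : ℝ) (hf : Continuous f)
    (hne : ∀ s ∈ Set.Ici a, f s ≠ 0) (h0 : 0 < f a) :
    ∀ s ∈ Set.Ici a, 0 < f s := by
  intro s hs
  by_contra h
  push_neg at h
  have hlt : f s < 0 := lt_of_le_of_ne h (hne s hs)
  have hsub : Set.Icc (f s) (f a) ⊆ f '' Set.Icc a s :=
    intermediate_value_Icc' hs (hf.continuousOn)
  obtain ⟨x, hx, hfx⟩ := hsub ⟨hlt.le, h0.le⟩
  exact hne x (Set.Icc_subset_Ici_self hx) hfx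

/-- Sturm comparison of logarithmic derivatives. -/
theorem sturm_comparison_log_deriv (Q₁ Q₂ y₁ y₂ : ℝ → ℝ) (a : ℝ)
    (hQ₁ : Continuous Q₁) (hQ₂ : Continuous Q₂)
    (hQ : ∀ s, a ≤ s → Q₂ s ≤ Q₁ s)
    (hy₁ : Differentiable ℝ y₁) (hy₁' : Differentiable ℝ (deriv y₁))
    (hy₂ : Differentiable ℝ y₂) (hy₂' : Differentiable ℝ (deriv y₂))
    (hode₁ : ∀ s, deriv (deriv y₁) s + Q₁ s * y₁ s = 0)
    (hode₂ : ∀ s, deriv (deriv y₂) s + Q₂ s * y₂ s = 0)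
    (hne₁ : ∀ s ∈ Set.Ioi a, y₁ s ≠ 0) (hne₂ : ∀ s ∈ Set.Ioi a, y₂ s ≠ 0)
    (ha : y₁ a ≠ 0) (hb : y₂ a ≠ 0)
    (hinit : deriv y₁ a / y₁ a ≤ deriv y₂ a / y₂ a) :
    ∀ s, a < s → deriv y₁ s / y₁ s ≤ deriv y₂ s / y₂ s := by
  set W : ℝ → ℝ := fun s => deriv y₂ s * y₁ s - deriv y₁ s * y₂ s with hWdef
  set p : ℝ → ℝ := fun s => y₁ s * y₂ s with hpdef
  have hpne : ∀ s ∈ Set.Ici a, p s ≠ 0 := by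
    intro s hs
    rcases eq_or_lt_of_le (Set.mem_Ici.mp hs) with h | h
    · simp [hpdef, ← h, ha, hb]
    · exact mul_ne_zero (hne₁ s h) (hne₂ s h)
  have hpc : Continuous p := (hy₁.continuous).mul (hy₂.continuous)
  have hWderiv : ∀ s, HasDerivAt W ((Q₁ s - Q₂ s) * p s) s := by
    intro s
    have h1 : HasDerivAt (deriv y₂) (deriv (deriv y₂) s) s := (hy₂' s).hasDerivAt
    have h2 : HasDerivAt (deriv y₁) (deriv (deriv y₁) s) s := (hy₁' s).hasDerivAt
    have h3 : HasDerivAt y₁ (deriv y₁ s) s := (hy₁ s).hasDerivAt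
    have h4 : HasDerivAt y₂ (deriv y₂ s) s := (hy₂ s).hasDerivAt
    have := (h1.mul h3).sub (h2.mul h4)
    have e₁ : deriv (deriv y₁) s = -(Q₁ s * y₁ s) := by linarith [hode₁ s]
    have e₂ : deriv (deriv y₂) s = -(Q₂ s * y₂ s) := by linarith [hode₂ s]
    refine this.congr_deriv ?_
    rw [e₁, e₂]; simp only [hpdef]; ring
  have hWdiff : Differentiable ℝ W := fun s => (hWderiv s).differentiableAt
  have hWd : ∀ s, deriv W s = (Q₁ s - Q₂ s) * p s := fun s => (hWderiv s).deriv
  have hWa : W a = (deriv y₂ a / y₂ a - deriv y₁ a / y₁ a) * p a := by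
    simp only [hWdef, hpdef]
    field_simp
  intro s hsgt
  have hss : s ∈ Set.Ici a := le_of_lt hsgt
  have key : 0 ≤ W s / p s := by
    rcases lt_or_gt_of_ne (hpne a Set.self_mem_Ici) with hpa | hpa
    · -- p < 0 on Ici a, W antitone, W a ≤ 0
      have hpneg : ∀ t ∈ Set.Ici a, p t < 0 := by
        intro t ht
        have h := sturm_aux_sign_pos (fun x => -p x) a hpc.neg
          (fun x hx => neg_ne_zero.mpr (hpne x hx)) (by simpa using neg_pos.mpr hpa) t ht
        have h' : 0 < -p t := by simpa using h
        linarith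
      have hanti : AntitoneOn W (Set.Ici a) := by
        apply antitoneOn_of_deriv_nonpos (convex_Ici a) hWdiff.continuous.continuousOn
          (fun t _ => (hWdiff t).differentiableWithinAt)
        intro t ht
        rw [interior_Ici] at ht
        rw [hWd t]
        have h1 : 0 ≤ Q₁ t - Q₂ t := by linarith [hQ t (le_of_lt ht)]
        exact mul_nonpos_of_nonneg_of_nonpos h1 (hpneg t (Set.mem_Ici.mpr (le_of_lt ht))).le
      have hWa0 : W a ≤ 0 := by
        rw [hWa]
        exact mul_nonpos_of_nonneg_of_nonpos (by linarith) (hpneg a Set.self_mem_Ici).le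
      have : W s ≤ W a := hanti Set.self_mem_Ici hss hsgt.le
      rw [← neg_div_neg_eq]
      exact div_nonneg (by linarith) (by linarith [hpneg s hss])
    · -- p > 0 on Ici a, W monotone, W a ≥ 0
      have hppos : ∀ t ∈ Set.Ici a, 0 < p t := sturm_aux_sign_pos p a hpc hpne hpa
      have hmono : MonotoneOn W (Set.Ici a) := by
        apply monotoneOn_of_deriv_nonneg (convex_Ici a) hWdiff.continuous.continuousOn
          (fun t _ => (hWdiff t).differentiableWithinAt)
        intro t ht
        rw [interior_Ici] at ht
        rw [hWd t]
        have h1 : 0 ≤ Q₁ t - Q₂ t := by linarith [hQ t (le_of_lt ht)]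
        exact mul_nonneg h1 (hppos t (Set.mem_Ici.mpr (le_of_lt ht))).le
      have hWa0 : 0 ≤ W a := by
        rw [hWa]
        exact mul_nonneg (by linarith) (hppos a Set.self_mem_Ici).le
      have : W a ≤ W s := hmono Set.self_mem_Ici hss hsgt.le
      exact div_nonneg (by linarith) (hppos s hss).le
  have h1 : y₁ s ≠ 0 := hne₁ s hsgt
  have h2 : y₂ s ≠ 0 := hne₂ s hsgt
  have heq : W s / p s = deriv y₂ s / y₂ s - deriv y₁ s / y₁ s := by
    simp only [hWdef, hpdef]
    field_simp
  rw [heq] at key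
  linarith
end

section
/- Assume y'' + Q(s)·y = 0 with Q continuous, Q(s) ≥ 0 for all s, and the equation nonoscillatory at s = +∞. Let y₂ be a principal solution at +∞ having a largest zero at s = a, and let y₁ be a solution linearly independent of y₂. Then y₁ vanishes at some point s > a. -/
open Filter

/-- If `y₂` is a principal solution at `+∞` of a nonoscillatory equation with
`Q ≥ 0`, with largest zero at `a`, then any linearly independent solution `y₁`
vanishes at some `s > a`. -/
theorem lin_indep_solution_vanishes_after_largest_zero_of_principal
    (Q y₁ y₂ : ℝ → ℝ) (a : ℝ) (hQ : Continuous Q) (hQpos : ∀ s, 0 ≤ Q s)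
    (hnonosc : ∀ y, IsSol Q y → y ≠ 0 → ∃ s₀ : ℝ, ∀ s ≥ s₀, y s ≠ 0)
    (hy₂ : IsSol Q y₂) (hy₂ne : y₂ ≠ 0)
    (hprincipal : ∀ z, IsSol Q z → (∀ s, z s * deriv y₂ s - y₂ s * deriv z s ≠ 0) →
      Tendsto (fun s => y₂ s / z s) atTop (nhds 0))
    (ha : y₂ a = 0) (hlargest : ∀ s, a < s → y₂ s ≠ 0)
    (hy₁ : IsSol Q y₁)
    (hW : ∀ s, y₁ s * deriv y₂ s - y₂ s * deriv y₁ s ≠ 0) :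
    ∃ s, a < s ∧ y₁ s = 0 := by
  by_contra hcon
  push_neg at hcon
  -- y₁ never vanishes on [a, ∞)
  have hne : ∀ s, a ≤ s → y₁ s ≠ 0 := by
    intro s hs
    rcases eq_or_lt_of_le hs with rfl | h
    · intro h0
      exact hW a (by rw [h0, ha]; ring)
    · exact hcon s h
  set W : ℝ → ℝ := fun s => y₁ s * deriv y₂ s - y₂ s * deriv y₁ s with hWdef
  have hWne : ∀ s, W s ≠ 0 := hW
  have hWcont : Continuous W :=
    (hy₁.1.continuous.mul hy₂.2.1.continuous).sub (hy₂.1.continuous.mul hy₁.2.1.continuous)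
  -- W has constant sign
  have hsign : (∀ s, 0 < W s) ∨ (∀ s, W s < 0) := by
    rcases (hWne a).lt_or_gt with hneg | hpos
    · right
      intro s
      by_contra hle
      push_neg at hle
      have h0 : 0 ∈ Set.uIcc (W a) (W s) :=
        Set.mem_uIcc.mpr (Or.inl ⟨hneg.le, hle⟩)
      obtain ⟨c, _, hc⟩ := intermediate_value_uIcc (f := W) hWcont.continuousOn h0
      exact hWne c hc
    · left
      intro s
      by_contra hle
      push_neg at hle
      have h0 : 0 ∈ Set.uIcc (W a) (W s) :=
        Set.mem_uIcc.mpr (Or.inr ⟨hle, hpos.le⟩)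
      obtain ⟨c, _, hc⟩ := intermediate_value_uIcc (f := W) hWcont.continuousOn h0
      exact hWne c hc
  set f : ℝ → ℝ := fun s => y₂ s / y₁ s with hfdef
  have htend : Tendsto f atTop (nhds 0) := hprincipal y₁ hy₁ hW
  have hfderiv : ∀ s, a ≤ s → HasDerivAt f (W s / (y₁ s) ^ 2) s := by
    intro s hs
    have h := (hy₂.1.differentiableAt (x := s)).hasDerivAt.div
      (hy₁.1.differentiableAt (x := s)).hasDerivAt (hne s hs)
    refine h.congr_deriv ?_
    simp only [hWdef]
    ring
  have hfcont : ContinuousOn f (Set.Ici a) :=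
    hy₂.1.continuous.continuousOn.div hy₁.1.continuous.continuousOn (fun s hs => hne s hs)
  have hfa : f a = 0 := by simp [hfdef, ha]
  have hsq : ∀ s, a ≤ s → 0 < (y₁ s) ^ 2 := fun s hs =>
    lt_of_le_of_ne (sq_nonneg _) (Ne.symm (pow_ne_zero 2 (hne s hs)))
  have hma : a ∈ Set.Ici a := Set.self_mem_Ici
  have hma1 : a + 1 ∈ Set.Ici a := by simp [Set.mem_Ici]
  rcases hsign with hpos | hneg
  · -- f strictly monotone on [a, ∞)
    have hmono : StrictMonoOn f (Set.Ici a) := by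
      apply strictMonoOn_of_deriv_pos (convex_Ici a) hfcont
      intro s hs
      rw [interior_Ici] at hs
      rw [(hfderiv s hs.le).deriv]
      exact div_pos (hpos s) (hsq s hs.le)
    have h1 : 0 < f (a + 1) := by
      have := hmono hma hma1 (lt_add_one a)
      linarith [hfa]
    have hev := htend.eventually (gt_mem_nhds h1)
    obtain ⟨u, hu1, hu2⟩ := (hev.and (eventually_ge_atTop (a + 1))).exists
    have : f (a + 1) ≤ f u :=
      hmono.monotoneOn hma1 (by simp [Set.mem_Ici]; linarith) hu2
    linarith
  · -- f strictly antitone on [a, ∞)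
    have hmono : StrictAntiOn f (Set.Ici a) := by
      apply strictAntiOn_of_deriv_neg (convex_Ici a) hfcont
      intro s hs
      rw [interior_Ici] at hs
      rw [(hfderiv s hs.le).deriv]
      exact div_neg_of_neg_of_pos (hneg s) (hsq s hs.le)
    have h1 : f (a + 1) < 0 := by
      have := hmono hma hma1 (lt_add_one a)
      linarith [hfa]
    have hev := htend.eventually (lt_mem_nhds h1)
    obtain ⟨u, hu1, hu2⟩ := (hev.and (eventually_ge_atTop (a + 1))).exists
    have : f u ≤ f (a + 1) :=
      hmono.antitoneOn hma1 (by simp [Set.mem_Ici]; linarith) hu2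
    linarith
end
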